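/- If a weakly realizable signed pattern contains consecutive entries with skip sizes a, x₁, x₂, …, x_k, b (with any signs) where a and b are even and every xᵢ is odd, then k is even; that is, odd skips occur in blocks of even size between even skips. -/
import Mathlib


/-- A signed pattern is a list of pairs `(ε, a)` with `ε ∈ {1, -1}` and `a` a positive skip size. -/
def IsSignedPattern (p : List (ℤ × ℕ)) : Prop :=
  ∀ e ∈ p, (e.1 = 1 ∨ e.1 = -1) ∧ 0 < e.2

/-- The (signed) sum of the steps of a pattern. -/
def stepSum (p : List (ℤ × ℕ)) : ℤ :=
  (p.map (fun e => e.1 * (e.2 : ℤ))).sum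

/-- The `i`-th term of the pattern started at `T`: `T_i = T + ε₁a₁ + ⋯ + εᵢaᵢ`. -/
def patTerm (T : ℤ) (p : List (ℤ × ℕ)) (i : ℕ) : ℤ :=
  T + stepSum (p.take i)

/-- The pattern `p` is weakly realized starting from `T`: `T` is a nonnegative integer, all terms
are nonnegative, and the left term of each step is an even multiple of its skip size when the
sign is `+1`, and an odd multiple when the sign is `-1`. -/
def WeaklyRealizableFrom (T : ℤ) (p : List (ℤ × ℕ)) : Prop :=
  0 ≤ T ∧ (∀ i, i ≤ p.length → 0 ≤ patTerm T p i) ∧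
    ∀ (i : ℕ) (h : i < p.length),
      ((p.get ⟨i, h⟩).1 = 1 → ∃ k : ℤ, patTerm T p i = 2 * k * ((p.get ⟨i, h⟩).2 : ℤ)) ∧
      ((p.get ⟨i, h⟩).1 = -1 → ∃ k : ℤ, patTerm T p i = (2 * k + 1) * ((p.get ⟨i, h⟩).2 : ℤ))

/-- A pattern is weakly realizable if it is weakly realized from some starting point. -/
def WeaklyRealizable (p : List (ℤ × ℕ)) : Prop :=
  ∃ T : ℤ, WeaklyRealizableFrom T p

/-- A pattern is realizable if it is weakly realized from some starting point in such a way that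
all of its terms `T₀, …, Tₙ` are pairwise distinct. -/
def Realizable (p : List (ℤ × ℕ)) : Prop :=
  ∃ T : ℤ, WeaklyRealizableFrom T p ∧
    ∀ i j : ℕ, i ≤ p.length → j ≤ p.length → i ≠ j → patTerm T p i ≠ patTerm T p j

lemma stepSum_append (l r : List (ℤ × ℕ)) : stepSum (l ++ r) = stepSum l + stepSum r := by
  simp [stepSum]

lemma even_stepSum_iff (m : List (ℤ × ℕ)) (hs : ∀ e ∈ m, e.1 = 1 ∨ e.1 = -1)
    (hm : ∀ e ∈ m, Odd e.2) : Even (stepSum m) ↔ Even m.length := by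
  induction m with
  | nil => simp [stepSum]
  | cons e t ih =>
    have hodd : Odd ((e.2 : ℤ)) := Int.odd_coe_nat e.2 |>.mpr (hm e (by simp))
    have he : Odd (e.1 * (e.2 : ℤ)) := by
      rcases hs e (by simp) with h1 | h1 <;> rw [h1] <;> simpa using hodd.neg
    have h1 : ¬ Even (e.1 * (e.2 : ℤ)) := Int.not_even_iff_odd.mpr he
    have hss : stepSum (e :: t) = e.1 * (e.2 : ℤ) + stepSum t := by simp [stepSum]
    rw [hss, Int.even_add,
      ih (fun x hx => hs x (by simp [hx])) (fun x hx => hm x (by simp [hx])),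
      List.length_cons, Nat.even_add_one]
    simp [h1]

lemma get_first (l₁ l₂ m : List (ℤ × ℕ)) (x y : ℤ × ℕ)
    (h : l₁.length < (l₁ ++ [x] ++ m ++ [y] ++ l₂).length) :
    (l₁ ++ [x] ++ m ++ [y] ++ l₂).get ⟨l₁.length, h⟩ = x := by
  simp [List.getElem_append_right, List.getElem_append_left]

lemma get_second (l₁ l₂ m : List (ℤ × ℕ)) (x y : ℤ × ℕ)
    (h : l₁.length + 1 + m.length < (l₁ ++ [x] ++ m ++ [y] ++ l₂).length) :
    (l₁ ++ [x] ++ m ++ [y] ++ l₂).get ⟨l₁.length + 1 + m.length, h⟩ = y := by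
  rw [List.get_eq_getElem]
  rw [List.getElem_append_left (by simp; omega)]
  rw [List.getElem_append_right (by simp; omega)]
  simp [show l₁.length + 1 + m.length - (l₁ ++ [x] ++ m).length = 0 by simp; omega]

/-- In a weakly realizable signed pattern, a block of consecutive odd skips lying between two
even skips has even size. -/
theorem odd_skips_in_even_blocks (l₁ l₂ m : List (ℤ × ℕ)) (εa εb : ℤ) (a b : ℕ)
    (ha : Even a) (hb : Even b) (hm : ∀ e ∈ m, Odd e.2)
    (hp : IsSignedPattern (l₁ ++ [(εa, a)] ++ m ++ [(εb, b)] ++ l₂))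
    (h : WeaklyRealizable (l₁ ++ [(εa, a)] ++ m ++ [(εb, b)] ++ l₂)) :
    Even m.length := by
  obtain ⟨T, _, _, hstep⟩ := h
  set p := l₁ ++ [(εa, a)] ++ m ++ [(εb, b)] ++ l₂ with hpdef
  have hlen : p.length = l₁.length + 1 + m.length + 1 + l₂.length := by
    simp [hpdef]; omega
  have h1 : l₁.length < p.length := by omega
  have h2 : l₁.length + 1 + m.length < p.length := by omega
  have hget1 : p.get ⟨l₁.length, h1⟩ = (εa, a) := get_first l₁ l₂ m _ _ h1
  have hget2 : p.get ⟨l₁.length + 1 + m.length, h2⟩ = (εb, b) :=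
    get_second l₁ l₂ m _ _ h2
  have haZ : Even ((a : ℤ)) := by exact_mod_cast ha
  have hEa : Even (patTerm T p l₁.length) := by
    obtain ⟨hc1, hc2⟩ := hstep l₁.length h1
    rw [hget1] at hc1 hc2
    rcases (hp (εa, a) (by simp [hpdef])).1 with hε | hε
    · obtain ⟨k, hk⟩ := hc1 hε; rw [hk]; exact haZ.mul_left _
    · obtain ⟨k, hk⟩ := hc2 hε; rw [hk]; exact haZ.mul_left _
  have hEb : Even (patTerm T p (l₁.length + 1 + m.length)) := by
    obtain ⟨hc1, hc2⟩ := hstep (l₁.length + 1 + m.length) h2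
    rw [hget2] at hc1 hc2
    have hbZ : Even ((b : ℤ)) := by exact_mod_cast hb
    rcases (hp (εb, b) (by simp [hpdef])).1 with hε | hε
    · obtain ⟨k, hk⟩ := hc1 hε; rw [hk]; exact hbZ.mul_left _
    · obtain ⟨k, hk⟩ := hc2 hε; rw [hk]; exact hbZ.mul_left _
  have htake1 : p.take l₁.length = l₁ := by
    rw [hpdef, show l₁ ++ [(εa, a)] ++ m ++ [(εb, b)] ++ l₂
        = l₁ ++ ([(εa, a)] ++ m ++ [(εb, b)] ++ l₂) by simp, List.take_left]
  have htake2 : p.take (l₁.length + 1 + m.length) = l₁ ++ [(εa, a)] ++ m := by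
    rw [hpdef, show l₁ ++ [(εa, a)] ++ m ++ [(εb, b)] ++ l₂
        = (l₁ ++ [(εa, a)] ++ m) ++ ([(εb, b)] ++ l₂) by simp,
      List.take_left' (by simp; omega)]
  have key : patTerm T p (l₁.length + 1 + m.length)
      = patTerm T p l₁.length + εa * (a : ℤ) + stepSum m := by
    rw [patTerm, patTerm, htake1, htake2, stepSum_append]
    have : stepSum [(εa, a)] = εa * (a : ℤ) := by simp [stepSum]
    rw [stepSum_append, this]; ring
  have hEm : Even (stepSum m) := by
    have heq : stepSum m = patTerm T p (l₁.length + 1 + m.length)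
        - patTerm T p l₁.length - εa * (a : ℤ) := by rw [key]; ring
    rw [heq]
    exact (hEb.sub hEa).sub (haZ.mul_left _)
  exact (even_stepSum_iff m
    (fun e he => (hp e (by simp [hpdef]; tauto)).1) hm).mp hEm
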